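/- Fix λ₁, …, λₙ ∈ ℝ and η ∈ ℝ, and complex numbers u₁,…,uₙ, v₁,…,vₙ. Suppose the real number A satisfies A cos η = Σ_a |v_a|² sin η + Σ_a ((|u_a|² − |v_a|²)/(1+λ_a²))(λ_a cos η + sin η) − Σ_a ((u_a conj(v_a) + conj(u_a) v_a)/(1+λ_a²))(λ_a sin η − cos η). Then A sin η + Σ_a |v_a|² cos η − Σ_a ((|u_a|² − |v_a|²)/(1+λ_a²))(λ_a sin η − cos η) − Σ_a ((u_a conj(v_a) + conj(u_a) v_a)/(1+λ_a²))(λ_a cos η + sin η) equals (1/cos η) Σ_a |u_a − λ_a v_a|²/(1+λ_a²), provided cos η ≠ 0. -/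

import Mathlib

open Real Complex

theorem stmt_9 (n : ℕ) (l : Fin n → ℝ) (η : ℝ) (u v : Fin n → ℂ) (A : ℝ)
    (hcos : Real.cos η ≠ 0)
    (hA : A * Real.cos η
        = (∑ a, ‖v a‖ ^ 2) * Real.sin η
          + ∑ a, ((‖u a‖ ^ 2 - ‖v a‖ ^ 2) / (1 + l a ^ 2))
              * (l a * Real.cos η + Real.sin η)
          - ∑ a, ((u a * starRingEnd ℂ (v a) + starRingEnd ℂ (u a) * v a).re
                / (1 + l a ^ 2)) * (l a * Real.sin η - Real.cos η)) :
    A * Real.sin η + (∑ a, ‖v a‖ ^ 2) * Real.cos η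
      - (∑ a, ((‖u a‖ ^ 2 - ‖v a‖ ^ 2) / (1 + l a ^ 2))
            * (l a * Real.sin η - Real.cos η))
      - (∑ a, ((u a * starRingEnd ℂ (v a) + starRingEnd ℂ (u a) * v a).re
            / (1 + l a ^ 2)) * (l a * Real.cos η + Real.sin η))
      = (1 / Real.cos η) *
          ∑ a, ‖u a - (l a : ℂ) * v a‖ ^ 2 / (1 + l a ^ 2) := by
  rw [one_div, inv_mul_eq_div, eq_div_iff hcos]
  have hcomb :
      Real.sin η * (∑ a, ((‖u a‖ ^ 2 - ‖v a‖ ^ 2) / (1 + l a ^ 2))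
              * (l a * Real.cos η + Real.sin η))
        - Real.cos η * (∑ a, ((‖u a‖ ^ 2 - ‖v a‖ ^ 2) / (1 + l a ^ 2))
            * (l a * Real.sin η - Real.cos η))
        - Real.sin η * (∑ a, ((u a * starRingEnd ℂ (v a) + starRingEnd ℂ (u a) * v a).re
                / (1 + l a ^ 2)) * (l a * Real.sin η - Real.cos η))
        - Real.cos η * (∑ a, ((u a * starRingEnd ℂ (v a) + starRingEnd ℂ (u a) * v a).re
            / (1 + l a ^ 2)) * (l a * Real.cos η + Real.sin η))
      = (∑ a, ‖u a - (l a : ℂ) * v a‖ ^ 2 / (1 + l a ^ 2))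
        - ∑ a, ‖v a‖ ^ 2 := by
    rw [Finset.mul_sum, Finset.mul_sum, Finset.mul_sum, Finset.mul_sum,
      ← Finset.sum_sub_distrib, ← Finset.sum_sub_distrib, ← Finset.sum_sub_distrib,
      ← Finset.sum_sub_distrib]
    refine Finset.sum_congr rfl fun a _ => ?_
    have hD : (1 : ℝ) + l a ^ 2 ≠ 0 := by positivity
    have pyth := Real.sin_sq_add_cos_sq η
    simp only [Complex.sq_norm, Complex.normSq_apply, Complex.sub_re, Complex.sub_im, Complex.add_re,
      Complex.mul_re, Complex.mul_im, Complex.conj_re, Complex.conj_im,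
      Complex.ofReal_re, Complex.ofReal_im]
    field_simp [Complex.sq_norm, Complex.normSq_apply, Complex.sub_re, Complex.sub_im,
      Complex.mul_re, Complex.mul_im, Complex.conj_re, Complex.conj_im,
      Complex.ofReal_re, Complex.ofReal_im]
    linear_combination ((u a).re ^ 2 + (u a).im ^ 2
      - 2 * l a * ((u a).re * (v a).re + (u a).im * (v a).im)
      - (v a).re ^ 2 - (v a).im ^ 2) * pyth
  linear_combination Real.sin η * hA + hcomb
    + (∑ a, ‖v a‖ ^ 2) * (Real.sin_sq_add_cos_sq η)
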